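/- There do not exist real numbers s, t with 0 < s < 1, 0 < t < 1 and a monic polynomial b(x) with nonnegative real coefficients, b(0) = 1, such that (1 + s x + t x^2 + x^5) · b(x) has all coefficients in {0,1}. -/
import Mathlib
open Polynomial

theorem no_unfair_one_sx_tx2_x5 :
    ¬ ∃ (s t : ℝ) (b : ℝ[X]), 0 < s ∧ s < 1 ∧ 0 < t ∧ t < 1 ∧ b.Monic ∧ b.coeff 0 = 1 ∧
      (∀ n, 0 ≤ b.coeff n) ∧
      (∀ n, ((1 + C s * X + C t * X ^ 2 + X ^ 5) * b).coeff n = 0 ∨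
            ((1 + C s * X + C t * X ^ 2 + X ^ 5) * b).coeff n = 1) := by
  rintro ⟨s, t, b, hs, hs1, ht, ht1, hm, hb0, hbn, hc⟩
  have key : ∀ n, ((1 + C s * X + C t * X ^ 2 + X ^ 5) * b).coeff n =
      b.coeff n + s * (if 1 ≤ n then b.coeff (n-1) else 0)
        + t * (if 2 ≤ n then b.coeff (n-2) else 0)
        + (if 5 ≤ n then b.coeff (n-5) else 0) := by
    intro n
    have h : (1 + C s * X + C t * X ^ 2 + X ^ 5) * b
        = b + C s * (b * X^1) + C t * (b * X^2) + b * X^5 := by ring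
    rw [h]
    simp only [coeff_add, coeff_C_mul, coeff_mul_X_pow', mul_ite, mul_zero]
  have h1 := hc 1; rw [key] at h1; norm_num at h1
  have h2 := hc 2; rw [key] at h2; norm_num at h2
  have h3 := hc 3; rw [key] at h3; norm_num at h3
  have h5 := hc 5; rw [key] at h5; norm_num at h5
  rw [hb0] at h1 h2 h5
  -- c1 = b1 + s ∈ {0,1}, positive → b1 = 1 - s
  have hb1 : b.coeff 1 = 1 - s := by
    rcases h1 with h | h
    · nlinarith [hbn 1]
    · linarith
  rw [hb1] at h2 h3
  have hb2 : b.coeff 2 = 1 - t - s * (1 - s) := by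
    rcases h2 with h | h
    · nlinarith [hbn 2]
    · linarith
  rw [hb2] at h3
  -- c5 = b5 + s b4 + t b3 + 1 ∈ {0,1} → t * b3 = 0 → b3 = 0
  have hb3 : b.coeff 3 = 0 := by
    rcases h5 with h | h
    · nlinarith [hbn 3, hbn 4, hbn 5]
    · nlinarith [hbn 3, hbn 4, hbn 5]
  rw [hb3] at h3
  -- b2 ≥ 0
  have hb2n := hbn 2; rw [hb2] at hb2n
  rcases h3 with h | h
  · nlinarith
  · nlinarith [mul_pos (sub_pos.2 hs1) (sub_pos.2 ht1), mul_pos hs ht,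
      mul_pos (mul_pos hs hs) (sub_pos.2 hs1)]
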